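/- Diameter bound for weight-one dilated entropy: the weight-one dilated entropy φ₁(x) = Σ_{j∈J} Σ_{a∈A_j} x[ja]·ln(x[ja]/x[p_j]) satisfies −ln|V| ≤ φ₁(x) ≤ 0 for every x ∈ Q, where |V| is the number of vertices (reduced normal-form strategies) of Q. Consequently, with x₁ = argmin_{x∈Q} φ₁(x), the Bregman divergence satisfies D_{φ₁}(x*, x₁) ≤ ln|V| for all x* ∈ Q. -/

import Mathlib

/-- A tree-form sequential decision process (TFSDP), modeled as a finite rooted tree whose
nodes are either decision points (`isDec = true`, the player picks one of the `k` actions) or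
observation points (`isDec = false`, with `k` children; `k = 0` means a terminal). -/
inductive GTree : Type where
  | node (isDec : Bool) (k : ℕ) (children : Fin k → GTree) : GTree

namespace GTree

/-- The set of points (decision points and sequences) of the tree. -/
def Pts : GTree → Type
  | .node _ k c => Unit ⊕ ((i : Fin k) × Pts (c i))

/-- The root point of a tree. -/
def root : (t : GTree) → Pts t
  | .node _ _ _ => Sum.inl ()

def ptsFintype : (t : GTree) → Fintype (Pts t)
  | .node _ k c =>
    haveI : ∀ i, Fintype (Pts (c i)) := fun i => ptsFintype (c i)
    inferInstanceAs (Fintype (Unit ⊕ ((i : Fin k) × Pts (c i))))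

attribute [instance] ptsFintype

/-- `isLeaf t p` holds when `p` is a terminal observation point. -/
def isLeaf : (t : GTree) → Pts t → Bool
  | .node isDec k _, Sum.inl _ => !isDec && k == 0
  | .node _ _ c, Sum.inr ⟨i, p⟩ => isLeaf (c i) p

/-- Sequence-form flow constraints for strategies: at a decision point the value splits over the
actions, at an observation point each child keeps the value of its parent. -/
def flowQ : (t : GTree) → (Pts t → ℝ) → Prop
  | .node true _ c, x =>
      (x (Sum.inl ()) = ∑ i, x (Sum.inr ⟨i, root (c i)⟩)) ∧
      ∀ i, flowQ (c i) (fun p => x (Sum.inr ⟨i, p⟩))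
  | .node false _ c, x =>
      (∀ i, x (Sum.inr ⟨i, root (c i)⟩) = x (Sum.inl ())) ∧
      ∀ i, flowQ (c i) (fun p => x (Sum.inr ⟨i, p⟩))

/-- Flow constraints for transition kernels: at a decision point each child keeps the value of
its parent, at a non-terminal observation point the value splits over the children. -/
def flowY : (t : GTree) → (Pts t → ℝ) → Prop
  | .node true _ c, y =>
      (∀ i, y (Sum.inr ⟨i, root (c i)⟩) = y (Sum.inl ())) ∧
      ∀ i, flowY (c i) (fun p => y (Sum.inr ⟨i, p⟩))
  | .node false k c, y =>
      (k ≠ 0 → y (Sum.inl ()) = ∑ i, y (Sum.inr ⟨i, root (c i)⟩)) ∧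
      ∀ i, flowY (c i) (fun p => y (Sum.inr ⟨i, p⟩))

/-- The (extended) sequence-form strategy polytope `Q̂`. -/
def memQ (t : GTree) (x : Pts t → ℝ) : Prop :=
  flowQ t x ∧ x (root t) = 1 ∧ ∀ p, x p ∈ Set.Icc (0 : ℝ) 1

/-- The (extended) transition-kernel polytope `Ŷ`. -/
def memY (t : GTree) (y : Pts t → ℝ) : Prop :=
  flowY t y ∧ y (root t) = 1 ∧ ∀ p, y p ∈ Set.Icc (0 : ℝ) 1

/-- Well-formedness: every decision point offers at least one action. -/
def wf : GTree → Prop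
  | .node isDec k c => (isDec = true → 0 < k) ∧ ∀ i, wf (c i)

/-- The leaf count `w(h)`: 1 at terminals, max over actions at decision points, sum over
children at non-terminal observation points. -/
def leafCount : GTree → ℕ
  | .node true _ c => Finset.univ.sup fun i => leafCount (c i)
  | .node false 0 _ => 1
  | .node false (_ + 1) c => ∑ i, leafCount (c i)

/-- The tree size `‖Q‖₁`: maximum number of observation points reachable by a pure strategy. -/
def treeSize : GTree → ℕ
  | .node true _ c => Finset.univ.sup fun i => treeSize (c i)
  | .node false _ c => 1 + ∑ i, treeSize (c i)

/-- The size of the largest action set. -/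
def maxA : GTree → ℕ
  | .node true k c => max k (Finset.univ.sup fun i => maxA (c i))
  | .node false _ c => Finset.univ.sup fun i => maxA (c i)

/-- The type of reduced normal-form (pure) strategies: pick one action at each reachable
decision point. -/
def Strat : GTree → Type
  | .node true k c => (i : Fin k) × Strat (c i)
  | .node false k c => (i : Fin k) → Strat (c i)

/-- The sum of a vector over the terminal observation points. -/
noncomputable def leafSum (t : GTree) (u : Pts t → ℝ) : ℝ :=
  ∑ p : Pts t, if isLeaf t p then u p else 0

/-- The sum of a vector over all observation points (sequences). -/
noncomputable def obsSum : (t : GTree) → (Pts t → ℝ) → ℝ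
  | .node true _ c, x => ∑ i, obsSum (c i) (fun p => x (Sum.inr ⟨i, p⟩))
  | .node false _ c, x => x (Sum.inl ()) + ∑ i, obsSum (c i) (fun p => x (Sum.inr ⟨i, p⟩))

/-- No observation point has exactly one child. -/
def noSingle : GTree → Prop
  | .node isDec k c => (isDec = false → k ≠ 1) ∧ ∀ i, noSingle (c i)

/-- The `y`-weighted dilated entropy
`∑_{j ∈ J} ∑_{a ∈ A_j} y[ja] * x[ja] * ln (x[ja] / x[p_j])`. -/
noncomputable def dilEnt : (t : GTree) → (Pts t → ℝ) → (Pts t → ℝ) → ℝ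
  | .node true _ c, x, y =>
      ∑ i, (y (Sum.inr ⟨i, root (c i)⟩) * x (Sum.inr ⟨i, root (c i)⟩) *
              Real.log (x (Sum.inr ⟨i, root (c i)⟩) / x (Sum.inl ())) +
            dilEnt (c i) (fun p => x (Sum.inr ⟨i, p⟩)) (fun p => y (Sum.inr ⟨i, p⟩)))
  | .node false _ c, x, y =>
      ∑ i, dilEnt (c i) (fun p => x (Sum.inr ⟨i, p⟩)) (fun p => y (Sum.inr ⟨i, p⟩))

end GTree

namespace GTree

def stratFintype : (t : GTree) → Fintype (Strat t)
  | .node true k c =>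
    haveI : ∀ i, Fintype (Strat (c i)) := fun i => stratFintype (c i)
    inferInstanceAs (Fintype ((i : Fin k) × Strat (c i)))
  | .node false k c =>
    haveI : ∀ i, Fintype (Strat (c i)) := fun i => stratFintype (c i)
    inferInstanceAs (Fintype ((i : Fin k) → Strat (c i)))

attribute [instance] stratFintype

lemma stratNonempty : ∀ (t : GTree), wf t → Nonempty (Strat t)
  | .node true k c, ⟨h1, h2⟩ => by
    obtain ⟨i⟩ := Fin.pos_iff_nonempty.mp (h1 rfl)
    obtain ⟨s⟩ := stratNonempty (c i) (h2 i)
    exact ⟨⟨i, s⟩⟩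
  | .node false k c, ⟨_, h2⟩ =>
    ⟨fun i => (stratNonempty (c i) (h2 i)).some⟩

lemma one_le_card_strat (t : GTree) (h : wf t) : 1 ≤ Nat.card (Strat t) := by
  haveI := stratNonempty t h
  exact Nat.card_pos

lemma term_bound (x r q S : ℝ) (hx : 0 ≤ x) (hr : 0 < r) (hq : 1 ≤ q) (hS : 0 < S) :
    -(q * r / S) + x - x * Real.log S ≤ x * Real.log (x / r) - x * Real.log q := by
  rcases eq_or_lt_of_le hx with h | h
  · have : 0 ≤ q * r / S := by positivity
    simp only [← h, zero_mul, sub_zero, zero_add]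
    linarith
  · have hq0 : 0 < q := lt_of_lt_of_le one_pos hq
    have key : Real.log (q * r / (x * S)) ≤ q * r / (x * S) - 1 :=
      Real.log_le_sub_one_of_pos (by positivity)
    have hlog : Real.log (q * r / (x * S)) =
        Real.log q - Real.log (x / r) - Real.log S := by
      rw [Real.log_div (by positivity) (by positivity),
          Real.log_mul (by positivity) (by positivity),
          Real.log_mul (by positivity) (by positivity),
          Real.log_div (by positivity) (by positivity)]
      ring
    have h2 : x * Real.log (q * r / (x * S)) ≤ q * r / S - x := by
      have h3 := mul_le_mul_of_nonneg_left key hx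
      have h4 : x * (q * r / (x * S) - 1) = q * r / S - x := by
        field_simp
      linarith [h4.le, h4.ge]
    rw [hlog] at h2
    nlinarith

lemma main : ∀ (t : GTree), wf t → ∀ x : Pts t → ℝ, flowQ t x → (∀ p, 0 ≤ x p) →
    -(x (root t) * Real.log (Nat.card (Strat t))) ≤ dilEnt t x (fun _ => 1) ∧
      dilEnt t x (fun _ => 1) ≤ 0
  | .node true k c, hw, x, ⟨hsum, hflow⟩, hx => by
    classical
    obtain ⟨hk, hwf⟩ := hw
    have IH := fun i => main (c i) (hwf i) _ (hflow i) (fun p => hx _)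
    have hxnn : ∀ i, 0 ≤ x (Sum.inr ⟨i, root (c i)⟩) := fun i => hx _
    have hcard : (Nat.card (Strat (GTree.node true k c)) : ℝ) =
        ∑ i, (Nat.card (Strat (c i)) : ℝ) := by
      show (Nat.card ((i : Fin k) × Strat (c i)) : ℝ) = _
      simp [Nat.card_eq_fintype_card, Fintype.card_sigma]
    have hq1 : ∀ i, (1 : ℝ) ≤ (Nat.card (Strat (c i)) : ℝ) := fun i => by
      exact_mod_cast one_le_card_strat (c i) (hwf i)
    simp only [dilEnt, one_mul]
    rw [show root (GTree.node true k c) = Sum.inl () from rfl]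
    by_cases h0 : x (Sum.inl ()) = 0
    · have hz : ∀ i ∈ Finset.univ, x (Sum.inr ⟨i, root (c i)⟩) = 0 :=
        (Finset.sum_eq_zero_iff_of_nonneg (fun i _ => hxnn i)).mp (h0 ▸ hsum.symm)
      have hterm : ∀ i, x (Sum.inr ⟨i, root (c i)⟩) *
            Real.log (x (Sum.inr ⟨i, root (c i)⟩) / x (Sum.inl ())) +
            dilEnt (c i) (fun p => x (Sum.inr ⟨i, p⟩)) (fun _ => 1) = 0 := by
        intro i
        have h1 := hz i (Finset.mem_univ i)
        have h2 := (IH i).1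
        have h3 := (IH i).2
        rw [h1] at h2
        simp only [zero_mul, neg_zero] at h2
        rw [h1]
        simp only [zero_mul, zero_add]
        linarith
      rw [Finset.sum_eq_zero fun i _ => hterm i]
      simp [h0]
    · have hrpos : 0 < x (Sum.inl ()) :=
        lt_of_le_of_ne (hsum ▸ Finset.sum_nonneg (fun i _ => hxnn i)) (Ne.symm h0)
      set r := x (Sum.inl ()) with hrdef
      have hSpos : (0 : ℝ) < ∑ i, (Nat.card (Strat (c i)) : ℝ) := by
        rw [← hcard]
        have := one_le_card_strat (GTree.node true k c) (show (true = true → 0 < k) ∧ ∀ i, wf (c i) from ⟨hk, hwf⟩)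
        exact_mod_cast lt_of_lt_of_le zero_lt_one (by exact_mod_cast this)
      constructor
      · rw [hcard]
        set S := ∑ i, (Nat.card (Strat (c i)) : ℝ) with hSdef
        have key : ∀ i ∈ (Finset.univ : Finset (Fin k)),
            -((Nat.card (Strat (c i)) : ℝ) * r / S) + x (Sum.inr ⟨i, root (c i)⟩)
              - x (Sum.inr ⟨i, root (c i)⟩) * Real.log S
            ≤ x (Sum.inr ⟨i, root (c i)⟩) * Real.log (x (Sum.inr ⟨i, root (c i)⟩) / r)
              + dilEnt (c i) (fun p => x (Sum.inr ⟨i, p⟩)) (fun _ => 1) := by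
          intro i _
          have h1 := term_bound (x (Sum.inr ⟨i, root (c i)⟩)) r (Nat.card (Strat (c i)))
            S (hxnn i) hrpos (hq1 i) hSpos
          have h2 := (IH i).1
          linarith
        have hsum2 := Finset.sum_le_sum key
        have e : ∑ i, (-((Nat.card (Strat (c i)) : ℝ) * r / S) + x (Sum.inr ⟨i, root (c i)⟩)
              - x (Sum.inr ⟨i, root (c i)⟩) * Real.log S) = -(r * Real.log S) := by
          rw [Finset.sum_sub_distrib, Finset.sum_add_distrib, Finset.sum_neg_distrib,
            ← Finset.sum_div, ← Finset.sum_mul, ← Finset.sum_mul, ← hsum, ← hSdef]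
          have hS0 : S ≠ 0 := ne_of_gt hSpos
          rw [mul_div_cancel_left₀ r hS0]
          ring
        rw [e] at hsum2
        exact hsum2
      · apply Finset.sum_nonpos
        intro i _
        have hle : x (Sum.inr ⟨i, root (c i)⟩) ≤ r := by
          rw [hsum]
          exact Finset.single_le_sum (fun j _ => hxnn j) (Finset.mem_univ i)
        have hlog : Real.log (x (Sum.inr ⟨i, root (c i)⟩) / r) ≤ 0 :=
          Real.log_nonpos (div_nonneg (hxnn i) hrpos.le) ((div_le_one hrpos).mpr hle)
        have := (IH i).2
        nlinarith [hxnn i]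
  | .node false k c, ⟨_, hwf⟩, x, ⟨heq, hflow⟩, hx => by
    classical
    have IH := fun i => main (c i) (hwf i) _ (hflow i) (fun p => hx _)
    have hcard : (Nat.card (Strat (GTree.node false k c)) : ℝ) =
        ∏ i, (Nat.card (Strat (c i)) : ℝ) := by
      show (Nat.card ((i : Fin k) → Strat (c i)) : ℝ) = _
      simp [Nat.card_eq_fintype_card, Fintype.card_pi]
    have hq1 : ∀ i, (1 : ℝ) ≤ (Nat.card (Strat (c i)) : ℝ) := fun i => by
      exact_mod_cast one_le_card_strat (c i) (hwf i)
    simp only [dilEnt, root]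
    constructor
    · rw [hcard, Real.log_prod (fun i _ => ne_of_gt (lt_of_lt_of_le one_pos (hq1 i)))]
      rw [Finset.mul_sum, ← Finset.sum_neg_distrib]
      apply Finset.sum_le_sum
      intro i _
      have h := (IH i).1
      rw [heq i] at h
      exact h
    · exact Finset.sum_nonpos fun i _ => (IH i).2

end GTree

open GTree in
/-- Diameter bound for the weight-one dilated entropy
`φ₁(x) = ∑_{j} ∑_{a} x[ja] ln (x[ja] / x[p_j])` (the weighted dilated entropy with all weights
equal to one): `-ln |V| ≤ φ₁(x) ≤ 0` for every `x ∈ Q`, where `|V|` is the number of reduced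
normal-form strategies. Consequently, if `x₁` minimizes `φ₁` over `Q` and `g` is a gradient of
`φ₁` at `x₁` (in the terminal coordinates) satisfying the first-order optimality condition
`⟨g, x* - x₁⟩ ≥ 0` for all `x* ∈ Q`, then the Bregman divergence satisfies
`D_{φ₁}(x*, x₁) = φ₁(x*) - φ₁(x₁) - ⟨g, x* - x₁⟩ ≤ ln |V|`. -/
theorem stmt18 (t : GTree) (hwf : wf t) :
    (∀ x : Pts t → ℝ, memQ t x →
      -Real.log (Nat.card (Strat t)) ≤ dilEnt t x (fun _ => 1) ∧
        dilEnt t x (fun _ => 1) ≤ 0) ∧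
    (∀ x₁ xstar : Pts t → ℝ, memQ t x₁ → memQ t xstar →
      (∀ x, memQ t x → dilEnt t x₁ (fun _ => 1) ≤ dilEnt t x (fun _ => 1)) →
      ∀ g : Pts t → ℝ,
        (∀ x, memQ t x →
          0 ≤ ∑ p : Pts t, if isLeaf t p then g p * (x p - x₁ p) else 0) →
        dilEnt t xstar (fun _ => 1) - dilEnt t x₁ (fun _ => 1) -
          (∑ p : Pts t, if isLeaf t p then g p * (xstar p - x₁ p) else 0)
          ≤ Real.log (Nat.card (Strat t))) := by
  have H := fun x hx => GTree.main t hwf x (hx : memQ t x).1 (fun p => ((hx.2.2) p).1)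
  constructor
  · intro x hx
    have h := H x hx
    rw [hx.2.1, one_mul] at h
    exact h
  · intro x₁ xstar h1 hstar hmin g hg
    have hA := H xstar hstar
    have hB := H x₁ h1
    rw [hstar.2.1, one_mul] at hA
    rw [h1.2.1, one_mul] at hB
    have hG := hg xstar hstar
    linarith [hA.2, hB.1]
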